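/- Let s > 0, let ν be a probability distribution on [s, ∞), and let X_2, …, X_n (n ≥ 2) be independent random variables each distributed according to ν. Set μ = E_{X∼ν}[s/X] and assume 0 < μ < 1. Then the expected social cost of mechanism K on the input (s, X_2, …, X_n) is strictly between (s/μ)·(1 − 1/(n·μ)) and s/μ: (s/μ)(1 − 1/(nμ)) < E[ SC_K(s, X_2, …, X_n) ] < s/μ. -/

import Mathlib

open MeasureTheory ProbabilityTheory Finset

/-- Social cost of mechanism K on a cost vector `t` (whose minimum is `⨅ i, t i`):
`SC_K(t) = ∑_k p_k^K · t_k` with `p_k^K = (1/t_k) · ∫_0^{min t} ∏_{i ≠ k} (1 − x/t_i) dx`. -/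
noncomputable def SCK (n : ℕ) (t : Fin n → ℝ) : ℝ :=
  ∑ k, ((1 / t k) * ∫ x in (0:ℝ)..(⨅ i, t i), ∏ i ∈ univ.erase k, (1 - x / t i)) * t k

lemma integral_prod_of_indep {Ω : Type*} [MeasureSpace Ω] [IsProbabilityMeasure (ℙ : Measure Ω)]
    {ι : Type*} {f : ι → Ω → ℝ}
    (hindep : iIndepFun f ℙ) (hmeas : ∀ i, Measurable (f i))
    (S : Finset ι) : ∫ ω, ∏ i ∈ S, f i ω ∂ℙ = ∏ i ∈ S, ∫ ω, f i ω ∂ℙ := by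
  classical
  induction S using Finset.induction with
  | empty => simp
  | @insert j S hj ih =>
    rw [Finset.prod_insert hj, ← ih]
    have h1 : IndepFun (f j) (∏ i ∈ S, f i) ℙ :=
      (hindep.indepFun_finset_prod_of_notMem hmeas hj).symm
    have hm : AEStronglyMeasurable (∏ i ∈ S, f i) ℙ := by
      have : Measurable (∏ i ∈ S, f i) := by
        simpa [Finset.prod_fn] using (Finset.measurable_prod S fun i _ => hmeas i)
      exact this.aestronglyMeasurable
    have h2 := h1.integral_mul_eq_mul_integral (hmeas j).aestronglyMeasurable hm
    have e1 : (fun ω => ∏ i ∈ insert j S, f i ω) = (f j * ∏ i ∈ S, f i) := by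
      ext ω; simp [Finset.prod_insert hj, Finset.prod_apply]
    have e2 : (fun ω => ∏ i ∈ S, f i ω) = (∏ i ∈ S, f i : Ω → ℝ) := by
      ext ω; simp [Finset.prod_apply]
    show ∫ ω, (∏ i ∈ insert j S, f i ω) ∂ℙ = (∫ ω, f j ω ∂ℙ) * ∫ ω, (∏ i ∈ S, f i ω) ∂ℙ
    rw [e1, e2, h2]

lemma SCK_eq (n : ℕ) [NeZero n] (s : ℝ) (hs : 0 < s) (t : Fin n → ℝ)
    (ht0 : t 0 = s) (ht : ∀ i, s ≤ t i) :
    SCK n t = ∑ k, ∫ x in (0:ℝ)..s, ∏ i ∈ univ.erase k, (1 - x / t i) := by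
  have hinf : (⨅ i, t i) = s :=
    le_antisymm ((ciInf_le (Finite.bddBelow_range t) 0).trans_eq ht0) (le_ciInf ht)
  unfold SCK
  rw [hinf]
  refine Finset.sum_congr rfl fun k _ => ?_
  have hk : t k ≠ 0 := (hs.trans_le (ht k)).ne'
  field_simp


set_option maxHeartbeats 1000000 in
/-- For `s > 0`, a probability distribution `ν` on `[s, ∞)`, and independent
`X_2, …, X_n ∼ ν` (with `n ≥ 2`), setting `μ = E_{X∼ν}[s/X] ∈ (0,1)`, the expected social cost
of mechanism K on the input `(s, X_2, …, X_n)` satisfies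
`(s/μ)(1 − 1/(nμ)) < E[SC_K] < s/μ`. -/
theorem mechanismK_expected_socialCost_bounds
    {Ω : Type*} [MeasureSpace Ω] [IsProbabilityMeasure (ℙ : Measure Ω)]
    (n : ℕ) [NeZero n] (hn : 2 ≤ n)
    (s : ℝ) (hs : 0 < s)
    (ν : Measure ℝ) [IsProbabilityMeasure ν] (hν : ν (Set.Iio s) = 0)
    (X : Fin n → Ω → ℝ) (hX0 : ∀ ω, X 0 ω = s)
    (hmeas : ∀ i, Measurable (X i))
    (hindep : iIndepFun X ℙ)
    (hdist : ∀ i : Fin n, i ≠ 0 → Measure.map (X i) ℙ = ν)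
    (μ : ℝ) (hμ : μ = ∫ x, s / x ∂ν) (hμ0 : 0 < μ) (hμ1 : μ < 1) :
    (s / μ) * (1 - 1 / ((n : ℝ) * μ)) < (∫ ω, SCK n (fun i => X i ω) ∂ℙ)
      ∧ (∫ ω, SCK n (fun i => X i ω) ∂ℙ) < s / μ := by
  obtain ⟨m, rfl⟩ : ∃ m, n = m + 2 := ⟨n - 2, by omega⟩
  have hs' : s ≠ 0 := hs.ne'
  have hμ' : μ ≠ 0 := hμ0.ne'
  set c : ℝ := μ / s with hc
  set q : ℝ := 1 - μ with hq
  have hq0 : 0 < q := by rw [hq]; linarith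
  have hq1 : q < 1 := by rw [hq]; linarith
  -- a.e. facts
  have hXs : ∀ i : Fin (m + 2), ∀ᵐ ω ∂(ℙ : Measure Ω), s ≤ X i ω := by
    intro i
    rcases eq_or_ne i 0 with rfl | hi
    · exact Filter.Eventually.of_forall fun ω => (hX0 ω).ge
    · have h0 : (ℙ : Measure Ω) (X i ⁻¹' Set.Iio s) = 0 := by
        rw [← Measure.map_apply (hmeas i) measurableSet_Iio, hdist i hi]; exact hν
      refine ae_iff.2 ?_
      convert h0 using 2
      ext ω; simp [not_le]
  have hA : ∀ᵐ ω ∂(ℙ : Measure Ω), ∀ i, s ≤ X i ω := ae_all_iff.2 hXs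
  have hν' : ∀ᵐ y ∂ν, s ≤ y := by
    refine ae_iff.2 ?_
    convert hν using 2
    ext y; simp [not_le]
  -- the mean of 1/y under ν
  have hcint : Integrable (fun y : ℝ => y⁻¹) ν := by
    refine (integrable_const (s⁻¹)).mono' measurable_inv.aestronglyMeasurable ?_
    filter_upwards [hν'] with y hy
    rw [Real.norm_eq_abs, abs_of_nonneg (inv_nonneg.2 ((hs.le.trans hy)))]
    exact inv_anti₀ hs hy
  have hinv : ∫ y, y⁻¹ ∂ν = μ / s := by
    have h1 : μ = s * ∫ y, y⁻¹ ∂ν := by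
      rw [hμ]
      simp_rw [div_eq_mul_inv]
      exact integral_const_mul s _
    rw [h1]; field_simp
  -- single-factor expectations
  have hfac : ∀ (x : ℝ) (i : Fin (m + 2)),
      ∫ ω, (1 - x / X i ω) ∂(ℙ : Measure Ω) = if i = 0 then 1 - x / s else 1 - c * x := by
    intro x i
    rcases eq_or_ne i 0 with rfl | hi
    · rw [if_pos rfl]
      have e : (fun ω => 1 - x / X 0 ω) = fun _ => 1 - x / s := by ext ω; rw [hX0]
      rw [e, integral_const]; simp
    · rw [if_neg hi]
      have hmap : ∫ ω, (1 - x / X i ω) ∂(ℙ : Measure Ω) = ∫ y, (1 - x / y) ∂ν := by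
        rw [← hdist i hi, integral_map (hmeas i).aemeasurable]
        exact (measurable_const.sub (measurable_const.div measurable_id)).aestronglyMeasurable
      rw [hmap]
      have e2 : ∫ y, (1 - x / y) ∂ν = 1 - x * (μ / s) := by
        simp_rw [div_eq_mul_inv]
        rw [integral_sub (integrable_const 1) (hcint.const_mul x), integral_const,
          integral_const_mul, hinv]
        simp [measure_univ, div_eq_mul_inv]
      rw [e2, hc]; ring
  -- expectation of the product, via independence
  have hprod : ∀ (x : ℝ) (k : Fin (m + 2)),
      ∫ ω, ∏ i ∈ univ.erase k, (1 - x / X i ω) ∂(ℙ : Measure Ω)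
        = ∏ i ∈ univ.erase k, (if i = 0 then 1 - x / s else 1 - c * x) := by
    intro x k
    have hind2 : iIndepFun (fun i ω => 1 - x / X i ω) ℙ :=
      hindep.comp (fun _ y => 1 - x / y)
        (fun _ => measurable_const.sub (measurable_const.div measurable_id))
    rw [integral_prod_of_indep hind2
      (fun i => measurable_const.sub (measurable_const.div (hmeas i)))]
    exact Finset.prod_congr rfl fun i _ => hfac x i
  -- value of the product
  have hP : ∀ (x : ℝ) (k : Fin (m + 2)),
      (∏ i ∈ univ.erase k, (if i = 0 then 1 - x / s else 1 - c * x))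
        = if k = 0 then (1 - c * x) ^ (m + 1) else (1 - x / s) * (1 - c * x) ^ m := by
    intro x k
    rcases eq_or_ne k 0 with rfl | hk
    · rw [if_pos rfl,
        Finset.prod_congr rfl (fun i hi => if_neg (Finset.ne_of_mem_erase hi)),
        Finset.prod_const]
      congr 1
      simp [Finset.card_erase_of_mem]
    · rw [if_neg hk]
      have h0 : (0 : Fin (m + 2)) ∈ univ.erase k :=
        Finset.mem_erase.2 ⟨Ne.symm hk, Finset.mem_univ 0⟩
      rw [← Finset.prod_erase_mul _ _ h0, if_pos rfl,
        Finset.prod_congr rfl (fun i hi => if_neg (Finset.ne_of_mem_erase hi)),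
        Finset.prod_const, mul_comm]
      congr 2
      rw [Finset.card_erase_of_mem h0, Finset.card_erase_of_mem (Finset.mem_univ k)]
      simp
  -- the measure on [0,s]
  set M : Measure ℝ := volume.restrict (Set.Ioc 0 s) with hM
  haveI hMfin : IsFiniteMeasure M := by
    constructor
    rw [hM, Measure.restrict_apply_univ, Real.volume_Ioc]
    exact ENNReal.ofReal_lt_top
  -- measurability of the joint integrand
  have hmeasF : ∀ k : Fin (m + 2),
      Measurable (fun p : Ω × ℝ => ∏ i ∈ univ.erase k, (1 - p.2 / X i p.1)) := by
    intro k
    refine Finset.measurable_prod _ fun i _ => ?_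
    exact measurable_const.sub (measurable_snd.div ((hmeas i).comp measurable_fst))
  -- a.e. bound on product measure
  have hbound : ∀ k : Fin (m + 2), ∀ᵐ p ∂((ℙ : Measure Ω).prod M),
      ‖∏ i ∈ univ.erase k, (1 - p.2 / X i p.1)‖ ≤ 1 := by
    intro k
    rw [Measure.ae_prod_iff_ae_ae (measurableSet_le (hmeasF k).norm measurable_const)]
    filter_upwards [hA] with ω hω
    filter_upwards [ae_restrict_mem measurableSet_Ioc] with x hx
    have hfacts : ∀ i ∈ univ.erase k, 0 ≤ 1 - x / X i ω ∧ 1 - x / X i ω ≤ 1 := by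
      intro i _
      have hXi : 0 < X i ω := hs.trans_le (hω i)
      constructor
      · have : x / X i ω ≤ 1 := (div_le_one hXi).2 (hx.2.trans (hω i))
        linarith
      · have : 0 ≤ x / X i ω := div_nonneg hx.1.le hXi.le
        linarith
    rw [Real.norm_eq_abs, abs_of_nonneg (Finset.prod_nonneg fun i hi => (hfacts i hi).1)]
    exact Finset.prod_le_one (fun i hi => (hfacts i hi).1) (fun i hi => (hfacts i hi).2)
  -- joint integrability
  have hInt : ∀ k : Fin (m + 2),
      Integrable (Function.uncurry fun ω x => ∏ i ∈ univ.erase k, (1 - x / X i ω))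
        ((ℙ : Measure Ω).prod M) := by
    intro k
    refine (integrable_const (1 : ℝ)).mono' (hmeasF k).aestronglyMeasurable ?_
    exact hbound k
  -- Step 1 : rewrite the expected social cost
  have step1 : ∫ ω, SCK (m + 2) (fun i => X i ω) ∂(ℙ : Measure Ω)
      = ∑ k : Fin (m + 2), ∫ ω, ∫ x, (∏ i ∈ univ.erase k, (1 - x / X i ω)) ∂M ∂(ℙ : Measure Ω) := by
    rw [integral_congr_ae (g := fun ω => ∑ k : Fin (m + 2),
        ∫ x, (∏ i ∈ univ.erase k, (1 - x / X i ω)) ∂M) ?_]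
    · exact integral_finset_sum _ fun k _ => (hInt k).integral_prod_left
    · filter_upwards [hA] with ω hω
      rw [SCK_eq (m + 2) s hs _ (hX0 ω) hω]
      refine Finset.sum_congr rfl fun k _ => ?_
      rw [intervalIntegral.integral_of_le hs.le, hM]
  -- Step 2 : Fubini + independence for each k
  have step2 : ∀ k : Fin (m + 2),
      ∫ ω, ∫ x, (∏ i ∈ univ.erase k, (1 - x / X i ω)) ∂M ∂(ℙ : Measure Ω)
        = if k = 0 then ∫ x, (1 - c * x) ^ (m + 1) ∂M
          else ∫ x, (1 - x / s) * (1 - c * x) ^ m ∂M := by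
    intro k
    rw [integral_integral_swap (hInt k)]
    rcases eq_or_ne k 0 with rfl | hk
    · rw [if_pos rfl]
      refine integral_congr_ae (Filter.Eventually.of_forall fun x => ?_)
      dsimp only
      rw [hprod x 0, hP x 0, if_pos rfl]
    · rw [if_neg hk]
      refine integral_congr_ae (Filter.Eventually.of_forall fun x => ?_)
      dsimp only
      rw [hprod x k, hP x k, if_neg hk]
  -- Step 3 : sum over k
  have step3 : ∫ ω, SCK (m + 2) (fun i => X i ω) ∂(ℙ : Measure Ω)
      = (∫ x, (1 - c * x) ^ (m + 1) ∂M)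
        + ((m : ℝ) + 1) * ∫ x, (1 - x / s) * (1 - c * x) ^ m ∂M := by
    rw [step1, Finset.sum_congr rfl fun k _ => step2 k,
      ← Finset.sum_erase_add _ _ (Finset.mem_univ (0 : Fin (m + 2))), if_pos rfl,
      Finset.sum_congr rfl fun k hk => if_neg (Finset.ne_of_mem_erase hk),
      Finset.sum_const]
    rw [Finset.card_erase_of_mem (Finset.mem_univ _)]
    simp [add_comm, nsmul_eq_mul]
  -- Step 4 : compute the integral by antiderivative
  set F : ℝ → ℝ := fun x =>
    -(s / μ) * ((μ + ((m : ℝ) + 1)) / (((m : ℝ) + 2) * μ) * (1 - c * x) ^ (m + 2)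
      - q / μ * (1 - c * x) ^ (m + 1)) with hF
  have hderiv : ∀ x ∈ Set.uIcc (0 : ℝ) s, HasDerivAt F
      ((1 - c * x) ^ (m + 1) + ((m : ℝ) + 1) * ((1 - x / s) * (1 - c * x) ^ m)) x := by
    intro x _
    have hu : HasDerivAt (fun x : ℝ => 1 - c * x) (-c) x := by
      simpa using ((hasDerivAt_id x).const_mul c).const_sub 1
    have h1 : HasDerivAt (fun x : ℝ => (1 - c * x) ^ (m + 2))
        ((((m : ℝ) + 2)) * (1 - c * x) ^ (m + 1) * (-c)) x := by
      have := hu.fun_pow (m + 2)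
      simpa using this
    have h2 : HasDerivAt (fun x : ℝ => (1 - c * x) ^ (m + 1))
        ((((m : ℝ) + 1)) * (1 - c * x) ^ m * (-c)) x := by
      have := hu.fun_pow (m + 1)
      simpa using this
    have hFd : HasDerivAt F (-(s / μ) *
        ((μ + ((m : ℝ) + 1)) / (((m : ℝ) + 2) * μ) * ((((m : ℝ) + 2)) * (1 - c * x) ^ (m + 1) * (-c))
          - q / μ * ((((m : ℝ) + 1)) * (1 - c * x) ^ m * (-c)))) x :=
      ((h1.const_mul _).sub (h2.const_mul _)).const_mul _
    convert hFd using 1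
    have hux : (1 : ℝ) - x / s = ((1 - c * x) - q) / μ := by
      rw [hc, hq]; field_simp; ring
    rw [hux, hc]
    have hsm : (1 : ℝ) - μ / s * x = (s - μ * x) / s := by field_simp
    rw [hsm]
    field_simp
    ring_nf
    field_simp
    ring
  have hcont : ContinuousOn (fun x : ℝ =>
      (1 - c * x) ^ (m + 1) + ((m : ℝ) + 1) * ((1 - x / s) * (1 - c * x) ^ m))
      (Set.uIcc (0 : ℝ) s) := by
    apply Continuous.continuousOn
    fun_prop
  have key : ∫ x in (0:ℝ)..s,
      ((1 - c * x) ^ (m + 1) + ((m : ℝ) + 1) * ((1 - x / s) * (1 - c * x) ^ m)) = F s - F 0 :=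
    intervalIntegral.integral_eq_sub_of_hasDerivAt hderiv
      (hcont.intervalIntegrable)
  -- relate interval integral to the M-integrals
  have hsplit : ∫ x in (0:ℝ)..s,
      ((1 - c * x) ^ (m + 1) + ((m : ℝ) + 1) * ((1 - x / s) * (1 - c * x) ^ m))
      = (∫ x, (1 - c * x) ^ (m + 1) ∂M)
        + ((m : ℝ) + 1) * ∫ x, (1 - x / s) * (1 - c * x) ^ m ∂M := by
    have i1 : IntervalIntegrable (fun x : ℝ => (1 - c * x) ^ (m + 1)) volume 0 s := by
      apply Continuous.intervalIntegrable; fun_prop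
    have i2 : IntervalIntegrable (fun x : ℝ => (1 - x / s) * (1 - c * x) ^ m) volume 0 s := by
      apply Continuous.intervalIntegrable; fun_prop
    rw [intervalIntegral.integral_add i1 (i2.const_mul _),
      intervalIntegral.integral_const_mul,
      intervalIntegral.integral_of_le hs.le, intervalIntegral.integral_of_le hs.le, hM]
  -- evaluate F s - F 0
  have hcs : 1 - c * s = q := by rw [hc, hq]; field_simp
  set B : ℝ := q ^ (m + 1) with hB
  have hB0 : 0 < B := pow_pos hq0 _
  have hB1 : B < 1 := pow_lt_one₀ hq0.le hq1 (Nat.succ_ne_zero m)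
  have hqB : 0 < 1 - q * B := by nlinarith
  have hEval : F s - F 0 = s / μ - s * q * (1 - q * B) / (((m : ℝ) + 2) * μ ^ 2) := by
    rw [hF]
    simp only [hcs, mul_zero, sub_zero, mul_one, one_pow]
    rw [hB, pow_succ q (m + 1)]
    have h2 : ((m : ℝ) + 2) ≠ 0 := by positivity
    rw [hq]
    field_simp
    ring
  have hE : ∫ ω, SCK (m + 2) (fun i => X i ω) ∂(ℙ : Measure Ω)
      = s / μ - s * q * (1 - q * B) / (((m : ℝ) + 2) * μ ^ 2) := by
    rw [step3, ← hsplit, key, hEval]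
  have hD : (0 : ℝ) < ((m : ℝ) + 2) * μ ^ 2 := by positivity
  have hcast : ((↑(m + 2) : ℝ)) = (m : ℝ) + 2 := by push_cast; ring
  constructor
  · rw [hE, hcast]
    have hlow : s / μ * (1 - 1 / (((m : ℝ) + 2) * μ))
        = s / μ - s / (((m : ℝ) + 2) * μ ^ 2) := by
      field_simp
    rw [hlow]
    have hlt : s * q * (1 - q * B) < s := by nlinarith [mul_pos hs (sub_pos.2 hq1), mul_pos hs (mul_pos (mul_pos hq0 hq0) hB0)]
    have h3 : s * q * (1 - q * B) / (((m : ℝ) + 2) * μ ^ 2) < s / (((m : ℝ) + 2) * μ ^ 2) := by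
      gcongr
    linarith
  · rw [hE]
    have hpos : 0 < s * q * (1 - q * B) / (((m : ℝ) + 2) * μ ^ 2) := by positivity
    linarith
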